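/- Let f ∈ ℤ[x] be irreducible over ℚ of degree d ≥ 1 with nonzero discriminant. There is a constant C (depending only on f) such that for every prime p dividing disc(f) and every k ≥ 1, the number of roots of f modulo p^k satisfies ρ_f(p^k) ≤ d · disc(f)². -/

import Mathlib

/-- The Sylvester-style matrix of two integer polynomials. -/
def sylv (f g : Polynomial ℤ) :
    Matrix (Fin (g.natDegree + f.natDegree)) (Fin (g.natDegree + f.natDegree)) ℤ :=
  Matrix.of fun i j =>
    if (i : ℕ) < g.natDegree then
      if (i : ℕ) ≤ (j : ℕ) ∧ (j : ℕ) ≤ (i : ℕ) + f.natDegree then f.coeff ((j : ℕ) - (i : ℕ))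
      else 0
    else
      if (i : ℕ) - g.natDegree ≤ (j : ℕ) ∧ (j : ℕ) ≤ ((i : ℕ) - g.natDegree) + g.natDegree then
        g.coeff ((j : ℕ) - ((i : ℕ) - g.natDegree))
      else 0

/-- The resultant of two integer polynomials, as a Sylvester determinant. -/
noncomputable def resInt (f g : Polynomial ℤ) : ℤ := (sylv f g).det

/-- The discriminant of an integer polynomial:
`disc f = (-1)^(d(d-1)/2) · res(f, f′) / leadingCoeff f`. -/
noncomputable def discInt (f : Polynomial ℤ) : ℤ :=
  (-1) ^ (f.natDegree * (f.natDegree - 1) / 2) * (resInt f f.derivative / f.leadingCoeff)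

/-- `rho f m` is the number of roots of `f` modulo `m`. -/
def rho (f : Polynomial ℤ) (m : ℕ) : ℕ :=
  ((Finset.range m).filter fun a : ℕ => (m : ℤ) ∣ f.eval (a : ℤ)).card

/-- `alphaExp f p N` is the exponent of the prime `p` in `∏_{n=1}^N |f(n)|`. -/
noncomputable def alphaExp (f : Polynomial ℤ) (p N : ℕ) : ℕ :=
  (∏ n ∈ Finset.Icc 1 N, (f.eval (n : ℤ)).natAbs).factorization p


open Polynomial Matrix Finset

/-- If some column is entrywise divisible by `r`, then `r` divides the determinant. -/
lemma dvd_det_of_dvd_col {n : ℕ} (A : Matrix (Fin n) (Fin n) ℤ) (j : Fin n) (r : ℤ)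
    (h : ∀ i, r ∣ A i j) : r ∣ A.det := by
  have hA : A = A.updateCol j (r • fun i => A i j / r) := by
    rw [show (r • fun i => A i j / r) = fun i => A i j from ?_, Matrix.updateCol_eq_self]
    funext i
    simpa [Pi.smul_apply, smul_eq_mul] using Int.mul_ediv_cancel' (h i)
  calc r ∣ r * (A.updateCol j fun i => A i j / r).det := Dvd.intro _ rfl
  _ = A.det := by rw [← Matrix.det_updateCol_smul]; exact congrArg Matrix.det hA.symm

/-- The row polynomials of the Sylvester matrix. -/
noncomputable def sylvRow (f g : Polynomial ℤ) (i : ℕ) : Polynomial ℤ :=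
  if i < g.natDegree then f * Polynomial.X ^ i else g * Polynomial.X ^ (i - g.natDegree)

lemma sylv_apply_eq_coeff (f g : Polynomial ℤ)
    (i j : Fin (g.natDegree + f.natDegree)) :
    sylv f g i j = (sylvRow f g i).coeff j := by
  unfold sylv sylvRow
  by_cases hi : (i : ℕ) < g.natDegree
  · simp only [hi, if_true, Matrix.of_apply, Polynomial.coeff_mul_X_pow']
    by_cases h1 : (i : ℕ) ≤ (j : ℕ)
    · by_cases h2 : (j : ℕ) ≤ (i : ℕ) + f.natDegree
      · simp [h1, h2]
      · simp only [h1, h2, and_false, if_false, if_true]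
        exact (Polynomial.coeff_eq_zero_of_natDegree_lt (by omega)).symm
    · simp [h1]
  · simp only [hi, if_false, Matrix.of_apply, Polynomial.coeff_mul_X_pow']
    by_cases h1 : (i : ℕ) - g.natDegree ≤ (j : ℕ)
    · by_cases h2 : (j : ℕ) ≤ ((i : ℕ) - g.natDegree) + g.natDegree
      · simp [h1, h2]
      · simp only [h1, h2, and_false, if_false, if_true]
        exact (Polynomial.coeff_eq_zero_of_natDegree_lt (by omega)).symm
    · simp [h1]

lemma sylvRow_coeff_eq_zero (f g : Polynomial ℤ) (hf : f ≠ 0) (hg : g ≠ 0)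
    (i : Fin (g.natDegree + f.natDegree)) (j : ℕ) (hj : g.natDegree + f.natDegree ≤ j) :
    (sylvRow f g i).coeff j = 0 := by
  apply Polynomial.coeff_eq_zero_of_natDegree_lt
  unfold sylvRow
  have hi := i.isLt
  by_cases h : (i : ℕ) < g.natDegree <;> simp only [h, if_true, if_false]
  · rw [Polynomial.natDegree_mul hf (pow_ne_zero _ Polynomial.X_ne_zero), Polynomial.natDegree_X_pow]
    omega
  · rw [Polynomial.natDegree_mul hg ((pow_ne_zero _ Polynomial.X_ne_zero)), Polynomial.natDegree_X_pow]
    omega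

/-- Every entry of the last column of the Sylvester matrix is divisible by any common
divisor of the two leading coefficients. -/
lemma sylv_lastCol_dvd (f g : Polynomial ℤ) (r : ℤ)
    (hrf : r ∣ f.leadingCoeff) (hrg : r ∣ g.leadingCoeff)
    (hn : 0 < g.natDegree + f.natDegree)
    (i : Fin (g.natDegree + f.natDegree)) :
    r ∣ sylv f g i ⟨g.natDegree + f.natDegree - 1, by omega⟩ := by
  have hi2 := i.isLt
  unfold sylv
  simp only [Matrix.of_apply]
  split_ifs with hi h h
  · have hj : (g.natDegree + f.natDegree - 1 : ℕ) - (i : ℕ) = f.natDegree := by omega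
    rw [hj]; exact hrf
  · exact dvd_zero r
  · have hj : (g.natDegree + f.natDegree - 1 : ℕ) - ((i : ℕ) - g.natDegree) = g.natDegree := by
      omega
    rw [hj]; exact hrg
  · exact dvd_zero r

/-- Bezout: there are integer polynomials with `u f + v g = res(f,g)/r`, whenever `r`
divides both leading coefficients. -/
lemma bezout_div (f g : Polynomial ℤ) (hf : f ≠ 0) (hg : g ≠ 0)
    (hn : 2 ≤ g.natDegree + f.natDegree) (r : ℤ) (hr : r ≠ 0)
    (hrf : r ∣ f.leadingCoeff) (hrg : r ∣ g.leadingCoeff) :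
    (∃ u v : Polynomial ℤ, u * f + v * g = Polynomial.C (resInt f g / r)) ∧ r ∣ resInt f g := by
  classical
  set n := g.natDegree + f.natDegree with hn'
  set M := sylv f g with hM
  have hnpos : 0 < n := by omega
  set jlast : Fin n := ⟨n - 1, by omega⟩ with hjlast
  set j0 : Fin n := ⟨0, hnpos⟩ with hj0
  have hcol : ∀ i : Fin n, r ∣ M i jlast := fun i => sylv_lastCol_dvd f g r hrf hrg (by omega) i
  have hRdvd : r ∣ resInt f g := dvd_det_of_dvd_col M jlast r hcol
  refine ⟨?_, hRdvd⟩
  -- adjugate entries are divisible by r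
  have hadj : ∀ i : Fin n, r ∣ Matrix.adjugate M j0 i := by
    intro i
    rw [Matrix.adjugate_apply]
    apply dvd_det_of_dvd_col _ jlast
    intro i2
    by_cases h : i2 = i
    · subst h
      rw [Matrix.updateRow_self]
      have hne : jlast ≠ j0 := by
        simp only [hjlast, hj0, ne_eq, Fin.mk.injEq]
        omega
      rw [Pi.single_eq_of_ne hne]
      exact dvd_zero r
    · rw [Matrix.updateRow_ne h]
      exact hcol i2
  set c : Fin n → ℤ := fun i => Matrix.adjugate M j0 i / r with hc
  have hcr : ∀ i, r * c i = Matrix.adjugate M j0 i := fun i => Int.mul_ediv_cancel' (hadj i)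
  set u : Polynomial ℤ := ∑ i : Fin n, if (i : ℕ) < g.natDegree
      then Polynomial.C (c i) * Polynomial.X ^ (i : ℕ) else 0 with hu
  set v : Polynomial ℤ := ∑ i : Fin n, if (i : ℕ) < g.natDegree
      then 0 else Polynomial.C (c i) * Polynomial.X ^ ((i : ℕ) - g.natDegree) with hv
  refine ⟨u, v, ?_⟩
  have key : Polynomial.C r * (u * f + v * g) = Polynomial.C (resInt f g) := by
    have expand : Polynomial.C r * (u * f + v * g)
        = ∑ i : Fin n, Polynomial.C (Matrix.adjugate M j0 i) * sylvRow f g i := by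
      rw [hu, hv, Finset.sum_mul, Finset.sum_mul, mul_add, Finset.mul_sum, Finset.mul_sum,
        ← Finset.sum_add_distrib]
      apply Finset.sum_congr rfl
      intro i _
      rw [← hcr i, Polynomial.C_mul]
      by_cases h : (i : ℕ) < g.natDegree <;>
        simp only [h, if_true, if_false, zero_mul, mul_zero, add_zero, zero_add, sylvRow] <;>
        ring
    rw [expand]
    ext j
    rw [Polynomial.finset_sum_coeff]
    simp only [Polynomial.coeff_C_mul]
    by_cases hj : j < n
    · have hre : ∀ i : Fin n, Matrix.adjugate M j0 i * (sylvRow f g i).coeff j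
          = Matrix.adjugate M j0 i * M i ⟨j, hj⟩ := by
        intro i
        rw [← sylv_apply_eq_coeff f g i ⟨j, hj⟩]
      rw [Finset.sum_congr rfl (fun i _ => hre i)]
      have hmul : ∑ i : Fin n, Matrix.adjugate M j0 i * M i ⟨j, hj⟩
          = (Matrix.adjugate M * M) j0 ⟨j, hj⟩ := (Matrix.mul_apply).symm
      rw [hmul, Matrix.adjugate_mul]
      simp only [Matrix.smul_apply, Matrix.one_apply, smul_eq_mul]
      rw [Polynomial.coeff_C]
      by_cases h0 : j = 0
      · subst h0
        have : j0 = ⟨0, hj⟩ := rfl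
        simp [resInt, ← hM, this]
      · have : ¬(j0 = ⟨j, hj⟩) := by
          simp only [hj0, Fin.mk.injEq]
          omega
        simp [this, h0]
    · have hz : ∀ i : Fin n, (sylvRow f g i).coeff j = 0 := fun i =>
        sylvRow_coeff_eq_zero f g hf hg i j (by omega)
      simp only [hz, mul_zero, Finset.sum_const_zero, Polynomial.coeff_C]
      have : j ≠ 0 := by omega
      simp [this]
  have hCr : (Polynomial.C r : Polynomial ℤ) ≠ 0 := by
    simpa using hr
  apply mul_left_cancel₀ hCr
  rw [key, ← Polynomial.C_mul, Int.mul_ediv_cancel' hRdvd]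
open Polynomial Finset

/-- Second-order Taylor: `f(b) - f(a) = (b-a)·f'(a) + (b-a)²·h`. -/
lemma taylor2 (f : Polynomial ℤ) (a b : ℤ) :
    ∃ h : ℤ, f.eval b - f.eval a = (b - a) * f.derivative.eval a + (b - a)^2 * h := by
  set F := f.comp (Polynomial.X + Polynomial.C a) with hF
  have hFb : f.eval b = F.eval (b - a) := by
    rw [hF, Polynomial.eval_comp]
    simp
  have hc0 : F.coeff 0 = f.eval a := by
    rw [Polynomial.coeff_zero_eq_eval_zero, hF, Polynomial.eval_comp]
    simp
  have hc1 : F.coeff 1 = f.derivative.eval a := by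
    have hd : Polynomial.derivative F = (Polynomial.derivative f).comp
        (Polynomial.X + Polynomial.C a) := by
      rw [hF, Polynomial.derivative_comp]
      simp
    have : F.coeff 1 = (Polynomial.derivative F).coeff 0 := by
      rw [Polynomial.coeff_derivative]
      simp
    rw [this, hd, Polynomial.coeff_zero_eq_eval_zero, Polynomial.eval_comp]
    simp
  set G := F - Polynomial.C (F.coeff 0) - Polynomial.C (F.coeff 1) * Polynomial.X with hG
  have hdvd : Polynomial.X ^ 2 ∣ G := by
    rw [Polynomial.X_pow_dvd_iff]
    intro d hd
    have e0 : G.coeff 0 = 0 := by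
      simp [hG, Polynomial.coeff_C]
    have e1 : G.coeff 1 = 0 := by
      simp only [hG, Polynomial.coeff_sub, Polynomial.coeff_C_mul, Polynomial.coeff_X_one,
        mul_one, Polynomial.coeff_C]
      simp
    interval_cases d
    · exact e0
    · exact e1
  obtain ⟨H, hH⟩ := hdvd
  refine ⟨H.eval (b - a), ?_⟩
  have : F = Polynomial.C (F.coeff 0) + Polynomial.C (F.coeff 1) * Polynomial.X
      + Polynomial.X ^ 2 * H := by
    rw [← hH, hG]; ring
  calc f.eval b - f.eval a = F.eval (b - a) - f.eval a := by rw [hFb]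
  _ = (b - a) * f.derivative.eval a + (b - a)^2 * H.eval (b - a) := by
      rw [this]
      simp only [Polynomial.eval_add, Polynomial.eval_mul, Polynomial.eval_pow,
        Polynomial.eval_C, Polynomial.eval_X, hc0, hc1]
      ring

/-- Evaluations at `x` and `x % m` agree mod `m`. -/
lemma eval_mod_dvd (f : Polynomial ℤ) (m : ℕ) (x : ℕ) :
    (m : ℤ) ∣ f.eval (x : ℤ) - f.eval ((x % m : ℕ) : ℤ) := by
  have h1 : (m : ℤ) ∣ (x : ℤ) - ((x % m : ℕ) : ℤ) := by
    push_cast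
    exact ⟨(x : ℤ) / (m : ℤ), by linarith [Int.mul_ediv_add_emod (x:ℤ) (m:ℤ)]⟩
  exact dvd_trans h1 (Polynomial.sub_dvd_eval_sub _ _ f)


/-- Generic fibering: `ρ(p^k) ≤ p^(k-j) ρ(p^j)` for `j ≤ k`. -/
lemma rho_le_mul (f : Polynomial ℤ) (p : ℕ) (hp : 0 < p) (j k : ℕ) (hjk : j ≤ k) :
    rho f (p ^ k) ≤ p ^ (k - j) * rho f (p ^ j) := by
  classical
  unfold rho
  apply Finset.card_le_mul_card_image_of_maps_to (f := fun x => x % p ^ j)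
  · intro x hx
    simp only [Finset.mem_filter, Finset.mem_range] at hx ⊢
    refine ⟨Nat.mod_lt _ (pow_pos hp j), ?_⟩
    have h1 : ((p:ℤ) ^ j) ∣ f.eval (x : ℤ) := by
      have : ((p:ℤ) ^ j) ∣ ((p:ℤ) ^ k) := pow_dvd_pow _ hjk
      exact dvd_trans this (by exact_mod_cast hx.2)
    have h2 := eval_mod_dvd f (p ^ j) x
    push_cast at h2
    have h3 := dvd_sub h1 h2
    push_cast
    simpa [sub_sub_cancel] using h3
  · intro b _
    -- fiber over b has at most p^(k-j) elements
    rw [← Finset.card_range (p ^ (k - j))]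
    apply Finset.card_le_card_of_injOn (fun x => x / p ^ j)
    · intro x hx
      simp only [Finset.mem_coe, Finset.mem_filter, Finset.mem_range] at hx ⊢
      have hxlt : x < p ^ k := hx.1.1
      rw [Nat.div_lt_iff_lt_mul (pow_pos hp j)]
      have heq : p ^ (k - j) * p ^ j = p ^ k := by
        rw [← pow_add]
        congr 1
        omega
      omega
    · intro x hx y hy hxy
      simp only [Finset.mem_coe, Finset.mem_filter] at hx hy
      have hxy' : x / p ^ j = y / p ^ j := hxy
      have hx2 := Nat.div_add_mod x (p ^ j)
      have hy2 := Nat.div_add_mod y (p ^ j)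
      rw [hxy'] at hx2
      omega

/-- `ρ(p) ≤ deg f` provided some coefficient of `f` is not divisible by `p`. -/
lemma rho_p_le (f : Polynomial ℤ) (p : ℕ) (hp : p.Prime)
    (hcont : ∃ i, ¬ (p : ℤ) ∣ f.coeff i) :
    rho f p ≤ f.natDegree := by
  classical
  haveI : Fact p.Prime := ⟨hp⟩
  set F := f.map (Int.castRingHom (ZMod p)) with hFdef
  have hF : F ≠ 0 := by
    obtain ⟨i, hi⟩ := hcont
    intro hzero
    apply hi
    have : F.coeff i = 0 := by rw [hzero]; simp
    rw [hFdef, Polynomial.coeff_map] at this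
    exact (ZMod.intCast_zmod_eq_zero_iff_dvd _ p).mp this
  unfold rho
  calc ((Finset.range p).filter fun a : ℕ => (p : ℤ) ∣ f.eval (a : ℤ)).card
      ≤ F.roots.toFinset.card := by
        apply Finset.card_le_card_of_injOn (fun a => ((a : ℕ) : ZMod p))
        · intro a ha
          simp only [Finset.mem_coe, Finset.mem_filter, Finset.mem_range] at ha
          rw [Finset.mem_coe, Multiset.mem_toFinset, Polynomial.mem_roots hF]
          show F.eval ((a : ℕ) : ZMod p) = 0
          rw [hFdef]
          have hcast : ((a : ℕ) : ZMod p) = (Int.castRingHom (ZMod p)) ((a : ℕ) : ℤ) := by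
            simp
          rw [hcast, Polynomial.eval_map, Polynomial.eval₂_hom]
          exact (ZMod.intCast_zmod_eq_zero_iff_dvd _ p).mpr ha.2
        · intro a ha b hb hab
          simp only [Finset.mem_coe, Finset.mem_filter, Finset.mem_range] at ha hb
          have h1 := ZMod.val_cast_of_lt ha.1
          have h2 := ZMod.val_cast_of_lt hb.1
          have h3 : (((a : ℕ) : ZMod p)).val = (((b : ℕ) : ZMod p)).val := congrArg ZMod.val hab
          omega
  _ ≤ Multiset.card F.roots := F.roots.toFinset_card_le
  _ ≤ F.natDegree := Polynomial.card_roots' F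
  _ ≤ f.natDegree := Polynomial.natDegree_map_le

/-- Key lemma: two roots of `f` mod `p^k` that agree mod `p^(e+1)` agree mod `p^(k-e)`,
given a Bezout certificate with constant not divisible by `p^(e+1)`. -/
lemma cluster (f : Polynomial ℤ) (p : ℕ) (hp : p.Prime) (e k : ℕ) (hk : 2*e+2 ≤ k)
    (u v : Polynomial ℤ) (W : ℤ)
    (hbez : u * f + v * f.derivative = Polynomial.C W)
    (hW : ¬ ((p:ℤ))^(e+1) ∣ W)
    (a b : ℤ)
    (hfa : ((p:ℤ))^k ∣ f.eval a) (hfb : ((p:ℤ))^k ∣ f.eval b)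
    (hab : ((p:ℤ))^(e+1) ∣ b - a) :
    ((p:ℤ))^(k-e) ∣ b - a := by
  have hWa : u.eval a * f.eval a + v.eval a * f.derivative.eval a = W := by
    have := congrArg (Polynomial.eval a) hbez
    simpa using this
  have hke1 : (e+1 : ℕ) ≤ k := by omega
  have hfa1 : ((p:ℤ))^(e+1) ∣ f.eval a := dvd_trans (pow_dvd_pow _ hke1) hfa
  have hnd : ¬ ((p:ℤ))^(e+1) ∣ (v.eval a * f.derivative.eval a) := by
    intro h
    exact hW (hWa ▸ dvd_add (Dvd.dvd.mul_left hfa1 _) h)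
  obtain ⟨h2, hh2⟩ := taylor2 f a b
  set s : ℤ := f.derivative.eval a + (b - a) * h2 with hs
  have hys : f.eval b - f.eval a = (b - a) * s := by rw [hs]; ring_nf; ring_nf at hh2; linarith
  have hdk : ((p:ℤ))^k ∣ (b - a) * s := hys ▸ dvd_sub hfb hfa
  have hnds : ¬ ((p:ℤ))^(e+1) ∣ v.eval a * s := by
    intro h
    apply hnd
    have : v.eval a * f.derivative.eval a = v.eval a * s - v.eval a * (b-a) * h2 := by
      rw [hs]; ring
    rw [this, mul_assoc]
    exact dvd_sub h (Dvd.dvd.mul_left (Dvd.dvd.mul_right hab _) _)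
  have hnds2 : ¬ ((p:ℤ))^(e+1) ∣ s := fun h => hnds (Dvd.dvd.mul_left h _)
  have hs0 : s ≠ 0 := by
    intro h
    exact hnds2 (h ▸ dvd_zero _)
  -- pass to ℕ
  set S := s.natAbs with hS
  have hS0 : S ≠ 0 := Int.natAbs_ne_zero.mpr hs0
  set j := S.factorization p with hj
  have hpjS : p ^ j ∣ S := Nat.ordProj_dvd S p
  have hje : j ≤ e := by
    by_contra hc
    apply hnds2
    have h1 : p ^ (e+1) ∣ p ^ j := pow_dvd_pow _ (by omega)
    have h2' : (p:ℤ) ^ (e+1) ∣ (S : ℤ) := by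
      have := dvd_trans h1 hpjS
      exact_mod_cast Int.natCast_dvd_natCast.mpr this
    exact (Int.dvd_natAbs).mp h2'
  set m := S / p ^ j with hm
  have hSm : p ^ j * m = S := Nat.ordProj_mul_ordCompl_eq_self S p
  have hpm : ¬ p ∣ m := Nat.not_dvd_ordCompl hp hS0
  have hdkN : p ^ k ∣ (b - a).natAbs * S := by
    have h1 : ((p:ℤ)^k).natAbs ∣ ((b - a) * s).natAbs := Int.natAbs_dvd_natAbs.mpr hdk
    simpa [Int.natAbs_mul, Int.natAbs_pow] using h1
  have hdk2 : p ^ (k - j) ∣ (b - a).natAbs * m := by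
    have hrw : (b - a).natAbs * S = ((b - a).natAbs * m) * p ^ j := by
      rw [← hSm]; ring
    rw [hrw] at hdkN
    have hpk : p ^ k = p ^ (k - j) * p ^ j := by
      rw [← pow_add]; congr 1; omega
    rw [hpk] at hdkN
    exact (Nat.mul_dvd_mul_iff_right (pow_pos hp.pos j)).mp hdkN
  have hcop : Nat.Coprime (p ^ (k - j)) m :=
    Nat.Coprime.pow_left _ ((Nat.Prime.coprime_iff_not_dvd hp).mpr hpm)
  have hfin : p ^ (k - j) ∣ (b - a).natAbs := (Nat.Coprime.dvd_of_dvd_mul_right hcop) hdk2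
  have hfin2 : p ^ (k - e) ∣ (b - a).natAbs := dvd_trans (pow_dvd_pow _ (by omega)) hfin
  have : ((p:ℤ))^(k-e) ∣ ((b - a).natAbs : ℤ) := by
    exact_mod_cast Int.natCast_dvd_natCast.mpr hfin2
  exact Int.dvd_natAbs.mp this

/-- Sharp fibering at large `k`. -/
lemma rho_sharp (f : Polynomial ℤ) (p : ℕ) (hp : p.Prime) (e k : ℕ) (hk : 2*e+2 ≤ k)
    (u v : Polynomial ℤ) (W : ℤ)
    (hbez : u * f + v * f.derivative = Polynomial.C W)
    (hW : ¬ ((p:ℤ))^(e+1) ∣ W) :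
    rho f (p ^ k) ≤ p ^ e * rho f (p ^ (e+1)) := by
  classical
  unfold rho
  apply Finset.card_le_mul_card_image_of_maps_to (f := fun x => x % p ^ (e+1))
  · intro x hx
    simp only [Finset.mem_filter, Finset.mem_range] at hx ⊢
    refine ⟨Nat.mod_lt _ (pow_pos hp.pos (e+1)), ?_⟩
    have h1 : ((p:ℤ) ^ (e+1)) ∣ f.eval (x:ℤ) := by
      have h2 : ((p:ℤ) ^ (e+1)) ∣ ((p:ℤ) ^ k) := pow_dvd_pow _ (by omega)
      refine dvd_trans h2 ?_
      exact_mod_cast hx.2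
    have h2 := eval_mod_dvd f (p ^ (e+1)) x
    push_cast at h2
    have h3 := dvd_sub h1 h2
    push_cast
    simpa [sub_sub_cancel] using h3
  · intro b _
    set T := ((Finset.range (p^k)).filter fun a : ℕ => ((p^k : ℕ) : ℤ) ∣ f.eval (a : ℤ)).filter
        (fun x => x % p ^ (e+1) = b) with hT
    show T.card ≤ p ^ e
    rcases T.eq_empty_or_nonempty with hemp | ⟨a0, ha0⟩
    · simp [hemp]
    have key : ∀ x ∈ T, x % p ^ (k - e) = a0 % p ^ (k - e) := by
      intro x hx
      have hmem : ∀ y, y ∈ T → y < p ^ k ∧ ((p:ℤ)^k ∣ f.eval (y:ℤ)) ∧ y % p ^ (e+1) = b := by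
        intro y hy
        simp only [hT, Finset.mem_filter, Finset.mem_range] at hy
        refine ⟨hy.1.1, by exact_mod_cast hy.1.2, hy.2⟩
      obtain ⟨hx1, hx2, hx3⟩ := hmem x hx
      obtain ⟨ha1, ha2, ha3⟩ := hmem a0 ha0
      have hab : ((p:ℤ))^(e+1) ∣ (x:ℤ) - (a0:ℤ) := by
        have hmm : (a0:ℤ) % (p:ℤ)^(e+1) = (x:ℤ) % (p:ℤ)^(e+1) := by
          have c1 : ((x % p ^ (e+1) : ℕ) : ℤ) = (x:ℤ) % ((p:ℤ))^(e+1) := by push_cast; ring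
          have c2 : ((a0 % p ^ (e+1) : ℕ) : ℤ) = (a0:ℤ) % ((p:ℤ))^(e+1) := by push_cast; ring
          rw [← c1, ← c2, hx3, ha3]
        exact Int.ModEq.dvd hmm
      have hclu := cluster f p hp e k hk u v W hbez hW (a0 : ℤ) (x : ℤ) ha2 hx2 hab
      have : ((p ^ (k-e) : ℕ) : ℤ) ∣ (x : ℤ) - (a0 : ℤ) := by push_cast; exact_mod_cast hclu
      have hmodeq : (x:ℤ) % ((p ^ (k-e) : ℕ) : ℤ) = (a0:ℤ) % ((p ^ (k-e) : ℕ) : ℤ) :=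
        Int.ModEq.symm (Int.modEq_iff_dvd.mpr this)
      have c1 : ((x % p ^ (k-e) : ℕ) : ℤ) = (x:ℤ) % ((p ^ (k-e) : ℕ) : ℤ) := by push_cast; ring
      have c2 : ((a0 % p ^ (k-e) : ℕ) : ℤ) = (a0:ℤ) % ((p ^ (k-e) : ℕ) : ℤ) := by push_cast; ring
      have : ((x % p ^ (k-e) : ℕ) : ℤ) = ((a0 % p ^ (k-e) : ℕ) : ℤ) := by rw [c1, c2, hmodeq]
      exact_mod_cast this
    rw [← Finset.card_range (p ^ e)]
    apply Finset.card_le_card_of_injOn (fun x => x / p ^ (k - e))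
    · intro x hx
      simp only [Finset.mem_coe, Finset.mem_range]
      have hx1 : x < p ^ k := by
        have := (Finset.mem_filter.mp (Finset.mem_filter.mp (hT ▸ hx)).1).1
        simpa using Finset.mem_range.mp this
      rw [Nat.div_lt_iff_lt_mul (pow_pos hp.pos (k-e))]
      have heq : p ^ e * p ^ (k - e) = p ^ k := by
        rw [← pow_add]; congr 1; omega
      omega
    · intro x hx y hy hxy
      have hxy' : x / p ^ (k-e) = y / p ^ (k-e) := hxy
      have k1 := key x hx
      have k2 := key y hy
      have hx2 := Nat.div_add_mod x (p ^ (k-e))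
      have hy2 := Nat.div_add_mod y (p ^ (k-e))
      rw [hxy'] at hx2
      omega

/-- Core bound: for a polynomial of degree ≥ 2 with some coefficient prime to `p`,
`ρ_f(p^k) ≤ d · p^(2 v_p(disc))`. -/
lemma core_bound (f : Polynomial ℤ) (p : ℕ) (hp : p.Prime) (hd2 : 2 ≤ f.natDegree)
    (hcont : ∃ i, ¬ (p:ℤ) ∣ f.coeff i)
    (hD0 : resInt f f.derivative / f.leadingCoeff ≠ 0) (k : ℕ) :
    rho f (p ^ k) ≤ f.natDegree *
      p ^ (2 * ((resInt f f.derivative / f.leadingCoeff).natAbs.factorization p)) := by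
  classical
  set d := f.natDegree with hd
  set g := f.derivative with hg
  set lc := f.leadingCoeff with hlc
  set R := resInt f g with hR
  set D := R / lc with hD
  set e := D.natAbs.factorization p with he
  have hf0 : f ≠ 0 := by
    intro h
    have hnd : f.natDegree = 0 := by rw [h]; simp
    omega
  have hlc0 : lc ≠ 0 := Polynomial.leadingCoeff_ne_zero.mpr hf0
  have hgcoeff : g.coeff (d - 1) = lc * d := by
    rw [hg, Polynomial.coeff_derivative]
    have h1 : d - 1 + 1 = d := by omega
    have h2 : ((d - 1 : ℕ) : ℤ) + 1 = (d : ℤ) := by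
      have : ((d - 1 : ℕ) : ℤ) = (d : ℤ) - 1 := by push_cast; omega
      rw [this]; ring
    rw [h1, h2, hlc, Polynomial.leadingCoeff, hd]
  have hdint : ((d : ℤ)) ≠ 0 := by
    exact_mod_cast (by omega : d ≠ 0)
  have hgc0 : g.coeff (d-1) ≠ 0 := by
    rw [hgcoeff]
    exact mul_ne_zero hlc0 hdint
  have hg0 : g ≠ 0 := fun h => hgc0 (by rw [h]; simp)
  have hgdeg : g.natDegree = d - 1 := by
    apply le_antisymm
    · have := Polynomial.natDegree_derivative_le f
      rw [← hg] at this
      exact this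
    · exact Polynomial.le_natDegree_of_ne_zero hgc0
  have hglc : g.leadingCoeff = lc * d := by
    rw [Polynomial.leadingCoeff, hgdeg, hgcoeff]
  have hn2 : 2 ≤ g.natDegree + f.natDegree := by omega
  -- lc divides R
  have hlcR : lc ∣ R :=
    (bezout_div f g hf0 hg0 hn2 lc hlc0 dvd_rfl (by rw [hglc]; exact Dvd.intro _ rfl)).2
  have hRD : lc * D = R := Int.mul_ediv_cancel' hlcR
  have hR0 : R ≠ 0 := by
    rw [← hRD]
    exact mul_ne_zero hlc0 hD0
  -- the Bezout certificate divided by p^t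
  set t := lc.natAbs.factorization p with ht
  have hpt : ((p:ℤ))^t ∣ lc := by
    have h1 : (p ^ t : ℕ) ∣ lc.natAbs := Nat.ordProj_dvd _ _
    have h2 : ((p^t : ℕ) : ℤ) ∣ (lc.natAbs : ℤ) := Int.natCast_dvd_natCast.mpr h1
    rw [Int.dvd_natAbs] at h2
    exact_mod_cast h2
  have hptne : ((p:ℤ))^t ≠ 0 := pow_ne_zero _ (by exact_mod_cast hp.ne_zero)
  obtain ⟨⟨u, v, hbez⟩, hRt⟩ := bezout_div f g hf0 hg0 hn2 ((p:ℤ)^t) hptne hpt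
    (dvd_trans hpt (by rw [hglc]; exact Dvd.intro _ rfl))
  set W := R / ((p:ℤ))^t with hW
  have hWR : ((p:ℤ))^t * W = R := Int.mul_ediv_cancel' hRt
  have hW0 : W ≠ 0 := by
    intro h
    rw [h, mul_zero] at hWR
    exact hR0 hWR.symm
  -- v_p(W) = e
  have hvW : W.natAbs.factorization p = e := by
    have hNat : p ^ t * W.natAbs = lc.natAbs * D.natAbs := by
      have : (((p:ℤ))^t * W).natAbs = (lc * D).natAbs := by rw [hWR, hRD]
      simpa [Int.natAbs_mul, Int.natAbs_pow] using this
    have hWa0 : W.natAbs ≠ 0 := Int.natAbs_ne_zero.mpr hW0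
    have hlca0 : lc.natAbs ≠ 0 := Int.natAbs_ne_zero.mpr hlc0
    have hDa0 : D.natAbs ≠ 0 := Int.natAbs_ne_zero.mpr hD0
    have hfac := congrArg (fun n => n.factorization p) hNat
    rw [Nat.factorization_mul (pow_ne_zero _ hp.ne_zero) hWa0,
      Nat.factorization_mul hlca0 hDa0, Nat.Prime.factorization_pow hp] at hfac
    simp only [Finsupp.add_apply, Finsupp.single_eq_same] at hfac
    rw [← ht, ← he] at hfac
    omega
  have hWnd : ¬ ((p:ℤ))^(e+1) ∣ W := by
    intro hdvd
    have h1 : (p : ℕ)^(e+1) ∣ W.natAbs := by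
      have := Int.natAbs_dvd_natAbs.mpr hdvd
      simpa [Int.natAbs_pow] using this
    rw [← hvW] at h1
    exact Nat.pow_succ_factorization_not_dvd (Int.natAbs_ne_zero.mpr hW0) hp h1
  -- now the counting
  have hrhop : rho f p ≤ d := rho_p_le f p hp hcont
  have hppos : 0 < p := hp.pos
  by_cases hk0 : k = 0
  · subst hk0
    have : rho f (p ^ 0) ≤ 1 := by
      unfold rho
      calc ((Finset.range (p^0)).filter _).card ≤ (Finset.range (p^0)).card :=
            Finset.card_filter_le _ _
      _ = 1 := by simp
    calc rho f (p^0) ≤ 1 := this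
    _ ≤ d * p ^ (2*e) := Nat.one_le_iff_ne_zero.mpr (by positivity)
  by_cases hksmall : k ≤ 2*e+1
  · calc rho f (p ^ k) ≤ p ^ (k - 1) * rho f (p ^ 1) := rho_le_mul f p hppos 1 k (by omega)
    _ ≤ p ^ (k-1) * d := by
        apply Nat.mul_le_mul_left
        rw [pow_one]
        exact hrhop
    _ ≤ p ^ (2*e) * d := by
        apply Nat.mul_le_mul_right
        exact Nat.pow_le_pow_right hp.one_lt.le (by omega)
    _ = d * p ^ (2*e) := by ring
  · have hkbig : 2*e+2 ≤ k := by omega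
    calc rho f (p ^ k) ≤ p ^ e * rho f (p ^ (e+1)) :=
          rho_sharp f p hp e k hkbig u v W hbez hWnd
    _ ≤ p ^ e * (p ^ e * rho f (p ^ 1)) := by
        apply Nat.mul_le_mul_left
        have := rho_le_mul f p hppos 1 (e+1) (by omega)
        simpa using this
    _ ≤ p ^ e * (p ^ e * d) := by
        apply Nat.mul_le_mul_left
        apply Nat.mul_le_mul_left
        rw [pow_one]
        exact hrhop
    _ = d * p ^ (2*e) := by
        rw [two_mul, pow_add]
        ring


/-- Counting at a coarser modulus. -/
lemma count_level_le (f : Polynomial ℤ) (p : ℕ) (hp : 0 < p) (J K : ℕ) (hJK : J ≤ K) :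
    ((Finset.range (p^K)).filter fun a : ℕ => ((p^J : ℕ) : ℤ) ∣ f.eval (a : ℤ)).card
      ≤ p ^ (K - J) * rho f (p ^ J) := by
  classical
  unfold rho
  apply Finset.card_le_mul_card_image_of_maps_to (f := fun x => x % p ^ J)
  · intro x hx
    simp only [Finset.mem_filter, Finset.mem_range] at hx ⊢
    refine ⟨Nat.mod_lt _ (pow_pos hp J), ?_⟩
    have h1 : ((p:ℤ) ^ J) ∣ f.eval (x : ℤ) := by exact_mod_cast hx.2
    have h2 := eval_mod_dvd f (p ^ J) x
    push_cast at h2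
    have h3 := dvd_sub h1 h2
    push_cast
    simpa [sub_sub_cancel] using h3
  · intro b _
    rw [← Finset.card_range (p ^ (K - J))]
    apply Finset.card_le_card_of_injOn (fun x => x / p ^ J)
    · intro x hx
      simp only [Finset.mem_coe, Finset.mem_filter, Finset.mem_range] at hx
      simp only [Finset.mem_coe, Finset.mem_range]
      have hxlt : x < p ^ K := hx.1.1
      rw [Nat.div_lt_iff_lt_mul (pow_pos hp J)]
      have heq : p ^ (K - J) * p ^ J = p ^ K := by
        rw [← pow_add]; congr 1; omega
      omega
    · intro x hx y hy hxy
      simp only [Finset.mem_coe, Finset.mem_filter] at hx hy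
      have hxy' : x / p ^ J = y / p ^ J := hxy
      have hx2 := Nat.div_add_mod x (p ^ J)
      have hy2 := Nat.div_add_mod y (p ^ J)
      rw [hxy'] at hx2
      omega

/-- The degree-one case: the discriminant is `1`. -/
lemma discInt_of_natDegree_one (f : Polynomial ℤ) (h1 : f.natDegree = 1) : discInt f = 1 := by
  have hf0 : f ≠ 0 := fun h => by simp [h] at h1
  have hlc0 : f.leadingCoeff ≠ 0 := Polynomial.leadingCoeff_ne_zero.mpr hf0
  have hg : f.derivative.natDegree = 0 := by
    have := Polynomial.natDegree_derivative_le f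
    omega
  haveI hsub : Subsingleton (Fin (f.derivative.natDegree + f.natDegree)) := by
    rw [hg, h1]
    exact Fin.subsingleton_one
  have hlt : 0 < f.derivative.natDegree + f.natDegree := by omega
  have hdet : resInt f f.derivative = sylv f f.derivative ⟨0, hlt⟩ ⟨0, hlt⟩ := by
    unfold resInt
    exact Matrix.det_eq_elem_of_subsingleton _ _
  have hentry : sylv f f.derivative ⟨0, hlt⟩ ⟨0, hlt⟩ = f.leadingCoeff := by
    unfold sylv
    simp only [Matrix.of_apply, hg]
    norm_num
    have hco : f.derivative.coeff 0 = f.coeff 1 := by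
      rw [Polynomial.coeff_derivative]
      push_cast
      ring
    rw [hco, Polynomial.leadingCoeff, h1]
  unfold discInt
  rw [hdet, hentry, h1]
  simp [Int.ediv_self hlc0]

set_option maxHeartbeats 1000000 in
/-- Main counting bound, with content peeled off. -/
lemma main_bound (f : Polynomial ℤ) (p : ℕ) (hp : p.Prime) (hd2 : 2 ≤ f.natDegree)
    (hD0 : resInt f f.derivative / f.leadingCoeff ≠ 0) (k : ℕ) :
    (rho f (p ^ k) : ℤ) ≤ (f.natDegree : ℤ) *
      (resInt f f.derivative / f.leadingCoeff) ^ 2 := by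
  classical
  have hf0 : f ≠ 0 := by
    intro h
    rw [h] at hd2
    simp at hd2
  have hlc0 : f.leadingCoeff ≠ 0 := Polynomial.leadingCoeff_ne_zero.mpr hf0
  -- content exponent
  set c := f.content.natAbs.factorization p with hc
  have hcont0 : f.content ≠ 0 := fun h => hf0 (Polynomial.content_eq_zero_iff.mp h)
  have hpcdvd : ((p:ℤ))^c ∣ f.content := by
    have h1 : (p ^ c : ℕ) ∣ f.content.natAbs := Nat.ordProj_dvd _ _
    have h2 : ((p^c : ℕ) : ℤ) ∣ (f.content.natAbs : ℤ) := Int.natCast_dvd_natCast.mpr h1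
    rw [Int.dvd_natAbs] at h2
    exact_mod_cast h2
  obtain ⟨g, hfg⟩ : Polynomial.C ((p:ℤ)^c) ∣ f :=
    Polynomial.dvd_content_iff_C_dvd.mp hpcdvd
  set q : ℤ := ((p:ℤ))^c with hq
  have hq0 : q ≠ 0 := pow_ne_zero _ (by exact_mod_cast hp.ne_zero)
  have hg0 : g ≠ 0 := by
    intro h
    rw [h, mul_zero] at hfg
    exact hf0 hfg
  -- g has a coefficient prime to p
  have hgcont : ∃ i, ¬ (p:ℤ) ∣ g.coeff i := by
    by_contra hcontra
    push_neg at hcontra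
    have hdvd : ((p:ℤ))^(c+1) ∣ f.content := by
      rw [Polynomial.dvd_content_iff_C_dvd]
      refine (Polynomial.C_dvd_iff_dvd_coeff _ _).mpr (fun i => ?_)
      rw [hfg, Polynomial.coeff_C_mul, pow_succ]
      exact mul_dvd_mul (dvd_refl _) (hcontra i)
    have hnat : p^(c+1) ∣ f.content.natAbs := by
      have := Int.natAbs_dvd_natAbs.mpr hdvd
      simpa [Int.natAbs_pow] using this
    exact Nat.pow_succ_factorization_not_dvd (Int.natAbs_ne_zero.mpr hcont0) hp hnat
  -- degrees
  have hdg : f.natDegree = g.natDegree := by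
    rw [hfg, Polynomial.natDegree_mul (by simpa using hq0) hg0]
    simp
  have hdf' : f.derivative = Polynomial.C q * g.derivative := by
    rw [hfg, Polynomial.derivative_mul, Polynomial.derivative_C, zero_mul, zero_add]
  have hg'0 : g.derivative ≠ 0 := by
    intro h
    have hf'0 : f.derivative = 0 := by rw [hdf', h, mul_zero]
    have hgc : g.derivative.coeff (g.natDegree - 1) = g.coeff g.natDegree * (g.natDegree : ℤ) := by
      rw [Polynomial.coeff_derivative]
      have h1 : g.natDegree - 1 + 1 = g.natDegree := by omega
      have h2 : ((g.natDegree - 1 : ℕ) : ℤ) + 1 = (g.natDegree : ℤ) := by push_cast; omega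
      rw [h1, h2]
    rw [h] at hgc
    simp only [Polynomial.coeff_zero] at hgc
    have : g.coeff g.natDegree ≠ 0 := by
      rw [← Polynomial.leadingCoeff]
      exact Polynomial.leadingCoeff_ne_zero.mpr hg0
    have hnd0 : ((g.natDegree : ℤ)) ≠ 0 := by exact_mod_cast (by omega : g.natDegree ≠ 0)
    exact (mul_ne_zero this hnd0) hgc.symm
  have hdg' : f.derivative.natDegree = g.derivative.natDegree := by
    rw [hdf', Polynomial.natDegree_mul (by simpa using hq0) hg'0]
    simp
  have hEq : f.derivative.natDegree + f.natDegree = g.derivative.natDegree + g.natDegree := by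
    rw [hdg, hdg']
  -- resultant scaling
  set n : ℕ := g.derivative.natDegree + g.natDegree with hn
  have hRscale : resInt f f.derivative = q ^ n * resInt g g.derivative := by
    unfold resInt
    have hform : sylv f f.derivative =
        Matrix.reindex (finCongr hEq).symm (finCongr hEq).symm (q • sylv g g.derivative) := by
      funext i j
      simp only [Matrix.reindex_apply, Matrix.submatrix_apply, Equiv.symm_symm,
        finCongr_apply, Matrix.smul_apply, smul_eq_mul]
      show sylv f f.derivative i j = q * sylv g g.derivative (Fin.cast hEq i) (Fin.cast hEq j)
      have hcf : ∀ s, f.coeff s = q * g.coeff s := by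
        intro s
        rw [hfg, Polynomial.coeff_C_mul]
      have hcf' : ∀ s, f.derivative.coeff s = q * g.derivative.coeff s := by
        intro s
        rw [hdf', Polynomial.coeff_C_mul]
      rcases i with ⟨iv, hiv⟩
      rcases j with ⟨jv, hjv⟩
      unfold sylv
      simp only [Matrix.of_apply, Fin.coe_cast, Fin.val_mk, Fin.cast_mk]
      rw [hdg, hdg']
      split_ifs <;> simp [hcf, hcf']
    rw [hform, Matrix.det_reindex_self, Matrix.det_smul, Fintype.card_fin]
  have hlcf : f.leadingCoeff = q * g.leadingCoeff := by
    rw [Polynomial.leadingCoeff, Polynomial.leadingCoeff, hdg, hfg, Polynomial.coeff_C_mul]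
  have hglc0 : g.leadingCoeff ≠ 0 := Polynomial.leadingCoeff_ne_zero.mpr hg0
  -- lc of g divides res of g
  have hgd2 : 2 ≤ g.natDegree := by omega
  have hgn2 : 2 ≤ g.derivative.natDegree + g.natDegree := by omega
  have hgcoeffd : g.derivative.coeff (g.natDegree - 1) = g.leadingCoeff * g.natDegree := by
    rw [Polynomial.coeff_derivative]
    have h1 : g.natDegree - 1 + 1 = g.natDegree := by omega
    have h2 : ((g.natDegree - 1 : ℕ) : ℤ) + 1 = (g.natDegree : ℤ) := by push_cast; omega
    rw [h1, h2, Polynomial.leadingCoeff]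
  have hgdnd0 : ((g.natDegree : ℤ)) ≠ 0 := by exact_mod_cast (by omega : g.natDegree ≠ 0)
  have hgdeg' : g.derivative.natDegree = g.natDegree - 1 := by
    have hle := Polynomial.natDegree_derivative_le g
    have hge := Polynomial.le_natDegree_of_ne_zero
      (p := g.derivative) (n := g.natDegree - 1)
      (by rw [hgcoeffd]; exact mul_ne_zero hglc0 hgdnd0)
    omega
  have hglc' : g.derivative.leadingCoeff = g.leadingCoeff * g.natDegree := by
    rw [Polynomial.leadingCoeff, hgdeg', hgcoeffd]
  have hglcdvd : g.leadingCoeff ∣ resInt g g.derivative :=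
    (bezout_div g g.derivative hg0 hg'0 hgn2 g.leadingCoeff hglc0 dvd_rfl
      (by rw [hglc']; exact Dvd.intro _ rfl)).2
  set Dg : ℤ := resInt g g.derivative / g.leadingCoeff with hDg
  have hDgR : g.leadingCoeff * Dg = resInt g g.derivative := Int.mul_ediv_cancel' hglcdvd
  -- D_f = q^(n-1) * D_g
  have hn1 : 1 ≤ n := by omega
  have hDf : resInt f f.derivative / f.leadingCoeff = q ^ (n-1) * Dg := by
    have hkey : resInt f f.derivative = f.leadingCoeff * (q ^ (n-1) * Dg) := by
      rw [hRscale, hlcf, ← hDgR]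
      have : q ^ n = q * q ^ (n - 1) := by
        rw [← pow_succ']
        congr 1
        omega
      rw [this]
      ring
    rw [hkey, Int.mul_ediv_cancel_left _ hlc0]
  have hDg0 : Dg ≠ 0 := by
    intro h
    rw [hDf, h, mul_zero] at hD0
    exact hD0 rfl
  -- core bound for g
  set e := Dg.natAbs.factorization p with he
  have hcore := core_bound g p hp hgd2 hgcont (by rw [← hDg]; exact hDg0)
  -- p^(2e) ≤ Dg^2
  have hpe : ((p:ℤ))^e ∣ Dg := by
    have h1 : (p ^ e : ℕ) ∣ Dg.natAbs := Nat.ordProj_dvd _ _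
    have h2 : ((p^e : ℕ) : ℤ) ∣ (Dg.natAbs : ℤ) := Int.natCast_dvd_natCast.mpr h1
    rw [Int.dvd_natAbs] at h2
    exact_mod_cast h2
  have hpeabs : ((p:ℤ))^e ≤ |Dg| := by
    have := Int.le_of_dvd (abs_pos.mpr hDg0) ((dvd_abs _ _).mpr hpe)
    exact this
  have hpe2 : ((p:ℤ))^(2*e) ≤ Dg^2 := by
    have h1 : ((p:ℤ))^(2*e) = (((p:ℤ))^e)^2 := by rw [← pow_mul, mul_comm]
    have h2 : Dg^2 = |Dg|^2 := (sq_abs Dg).symm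
    rw [h1, h2]
    have hpos : (0:ℤ) ≤ ((p:ℤ))^e := by positivity
    exact pow_le_pow_left₀ hpos hpeabs 2
  -- count transfer
  have hppos : 0 < p := hp.pos
  have hrhof : (rho f (p^k) : ℤ) ≤ (p:ℤ)^c * (g.natDegree * (p:ℤ)^(2*e)) := by
    by_cases hkc : k ≤ c
    · have h1 : rho f (p^k) ≤ p^k := by
        unfold rho
        calc _ ≤ (Finset.range (p^k)).card := Finset.card_filter_le _ _
        _ = p^k := Finset.card_range _
      have h2 : (p:ℤ)^k ≤ (p:ℤ)^c := by
        apply pow_le_pow_right₀ (by exact_mod_cast hp.one_lt.le)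
        omega
      calc (rho f (p^k) : ℤ) ≤ (p:ℤ)^k := by exact_mod_cast h1
      _ ≤ (p:ℤ)^c := h2
      _ ≤ (p:ℤ)^c * (g.natDegree * (p:ℤ)^(2*e)) := by
          nth_rewrite 1 [← mul_one ((p:ℤ)^c)]
          apply mul_le_mul_of_nonneg_left _ (by positivity)
          have : (1:ℤ) ≤ g.natDegree := by exact_mod_cast (by omega : 1 ≤ g.natDegree)
          nlinarith [pow_pos (show (0:ℤ) < p by exact_mod_cast hppos) (2*e)]
    · push_neg at hkc
      have hkc' : c ≤ k := by omega
      have hcount : rho f (p^k) ≤ p^c * rho g (p^(k-c)) := by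
        unfold rho
        have hfilter : ((Finset.range (p^k)).filter fun a : ℕ => ((p^k : ℕ) : ℤ) ∣ f.eval (a:ℤ))
            = ((Finset.range (p^k)).filter fun a : ℕ => ((p^(k-c) : ℕ) : ℤ) ∣ g.eval (a:ℤ)) := by
          apply Finset.filter_congr
          intro x _
          have hev : f.eval (x:ℤ) = q * g.eval (x:ℤ) := by
            rw [hfg]
            simp
          rw [hev]
          constructor
          · intro hdvd
            have hsplit : ((p^k : ℕ) : ℤ) = q * ((p^(k-c) : ℕ) : ℤ) := by
              rw [hq]
              push_cast
              rw [← pow_add]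
              congr 1
              omega
            rw [hsplit] at hdvd
            exact (mul_dvd_mul_iff_left hq0).mp hdvd
          · intro hdvd
            have hsplit : ((p^k : ℕ) : ℤ) = q * ((p^(k-c) : ℕ) : ℤ) := by
              rw [hq]
              push_cast
              rw [← pow_add]
              congr 1
              omega
            rw [hsplit]
            exact mul_dvd_mul (dvd_refl q) hdvd
        rw [hfilter]
        have := count_level_le g p hppos (k-c) k (by omega)
        have hkk : k - (k - c) = c := by omega
        rw [hkk] at this
        exact this
      calc (rho f (p^k) : ℤ) ≤ (p:ℤ)^c * (rho g (p^(k-c)) : ℤ) := by exact_mod_cast hcount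
      _ ≤ (p:ℤ)^c * (g.natDegree * (p:ℤ)^(2*e)) := by
          apply mul_le_mul_of_nonneg_left _ (by positivity)
          have hcast : (rho g (p^(k-c)) : ℤ) ≤ ((g.natDegree * p ^ (2 * e) : ℕ) : ℤ) := by
            exact_mod_cast hcore (k-c)
          push_cast at hcast
          exact hcast
  -- final comparison
  have hfinal : (p:ℤ)^c * ((g.natDegree : ℤ) * (p:ℤ)^(2*e))
      ≤ (f.natDegree : ℤ) * (resInt f f.derivative / f.leadingCoeff)^2 := by
    rw [hDf, hdg]
    have hexpand : ((q ^ (n-1) * Dg)^2) = q^(2*(n-1)) * Dg^2 := by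
      rw [mul_pow, ← pow_mul, mul_comm (n-1) 2]
    rw [hexpand]
    have hc2 : (p:ℤ)^c ≤ q^(2*(n-1)) := by
      rw [hq, ← pow_mul]
      apply pow_le_pow_right₀ (by exact_mod_cast hp.one_lt.le)
      have h1 : 1 ≤ n - 1 := by omega
      calc c = c * 1 := (mul_one c).symm
      _ ≤ c * (2*(n-1)) := Nat.mul_le_mul_left c (by omega)
    calc (p:ℤ)^c * ((g.natDegree : ℤ) * (p:ℤ)^(2*e))
        ≤ q^(2*(n-1)) * ((g.natDegree : ℤ) * Dg^2) := by
          apply mul_le_mul hc2 _ (by positivity) (by positivity)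
          apply mul_le_mul_of_nonneg_left hpe2 (by positivity)
    _ = (g.natDegree : ℤ) * (q^(2*(n-1)) * Dg^2) := by ring
  exact le_trans hrhof hfinal

/-- If `f ∈ ℤ[x]` is irreducible over `ℚ` of degree `d ≥ 1` with nonzero discriminant, then
for every prime `p ∣ disc f` and every `k ≥ 1`: `ρ_f(p^k) ≤ d · (disc f)²`. -/
theorem rho_prime_pow_ramified_le (f : Polynomial ℤ)
    (hirr : Irreducible (f.map (Int.castRingHom ℚ))) (hdeg : 1 ≤ f.natDegree)
    (hdisc : discInt f ≠ 0) (p : ℕ) (hp : p.Prime) (hpd : (p : ℤ) ∣ discInt f)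
    (k : ℕ) (hk : 1 ≤ k) :
    (rho f (p ^ k) : ℤ) ≤ (f.natDegree : ℤ) * (discInt f) ^ 2 := by
  by_cases hd1 : f.natDegree = 1
  · exfalso
    rw [discInt_of_natDegree_one f hd1] at hpd
    have h1 := Int.le_of_dvd one_pos hpd
    have h2 := hp.two_le
    omega
  · have hd2 : 2 ≤ f.natDegree := by omega
    have hD0 : resInt f f.derivative / f.leadingCoeff ≠ 0 := by
      intro h
      apply hdisc
      unfold discInt
      rw [h, mul_zero]
    have hsq : (discInt f)^2 = (resInt f f.derivative / f.leadingCoeff)^2 := by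
      unfold discInt
      rw [mul_pow]
      have h1 : ((-1:ℤ) ^ (f.natDegree * (f.natDegree - 1) / 2))^2 = 1 := by
        rw [← pow_mul, mul_comm, pow_mul]
        simp
      rw [h1, one_mul]
    rw [hsq]
    exact main_bound f p hp hd2 hD0 k
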